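/- Let R be a ring (associative with identity, not necessarily commutative) and let G be a group. If the augmentation ideal I(R,G) is nil (every element of I(R,G) is nilpotent), then the group ring RG is uniquely weakly nil-clean if and only if R is uniquely weakly nil-clean. -/

import Mathlib

universe u v

/-- An element `e` is a very idempotent if `e` or `-e` is an idempotent. -/
def IsVeryIdempotent {R : Type u} [Ring R] (e : R) : Prop :=
  IsIdempotentElem e ∨ IsIdempotentElem (-e)

/-- `a` is uniquely weakly nil-clean: it is a sum of a nilpotent and a very idempotent,
and for any two such representations `a = w₁ + e₁ = w₂ + e₂` one has `e₁ ^ 2 = e₂ ^ 2`. -/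
def IsUniquelyWeaklyNilClean {R : Type u} [Ring R] (a : R) : Prop :=
  (∃ w e : R, IsNilpotent w ∧ IsVeryIdempotent e ∧ a = w + e) ∧
  ∀ w₁ e₁ w₂ e₂ : R, IsNilpotent w₁ → IsVeryIdempotent e₁ → IsNilpotent w₂ →
    IsVeryIdempotent e₂ → a = w₁ + e₁ → a = w₂ + e₂ → e₁ ^ 2 = e₂ ^ 2

/-- A ring is uniquely weakly nil-clean if every element is. -/
def UniquelyWeaklyNilCleanRing (R : Type u) [Ring R] : Prop :=
  ∀ a : R, IsUniquelyWeaklyNilClean a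

/-- `a` is uniquely nil-clean: it is a sum of a nilpotent and an idempotent,
and for any two such representations `a = w₁ + e₁ = w₂ + e₂` one has `e₁ = e₂`. -/
def IsUniquelyNilClean {R : Type u} [Ring R] (a : R) : Prop :=
  (∃ w e : R, IsNilpotent w ∧ IsIdempotentElem e ∧ a = w + e) ∧
  ∀ w₁ e₁ w₂ e₂ : R, IsNilpotent w₁ → IsIdempotentElem e₁ → IsNilpotent w₂ →
    IsIdempotentElem e₂ → a = w₁ + e₁ → a = w₂ + e₂ → e₁ = e₂

/-- A ring is uniquely nil-clean if every element is. -/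
def UniquelyNilCleanRing (R : Type u) [Ring R] : Prop :=
  ∀ a : R, IsUniquelyNilClean a

/-- `a` is a zero-divisor: there are nonzero `b, c` with `a * b = 0` and `c * a = 0`. -/
def IsZeroDivisorPair {R : Type u} [Ring R] (a : R) : Prop :=
  ∃ b c : R, b ≠ 0 ∧ c ≠ 0 ∧ a * b = 0 ∧ c * a = 0

/-- A ring is abelian if every idempotent is central. -/
def AbelianRing (R : Type u) [Ring R] : Prop :=
  ∀ e : R, IsIdempotentElem e → ∀ x : R, e * x = x * e

/-- A ring is periodic if every element satisfies `a ^ m = a ^ n` for distinct positive `m, n`. -/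
def PeriodicRing (R : Type u) [Ring R] : Prop :=
  ∀ a : R, ∃ m n : ℕ, 0 < m ∧ 0 < n ∧ m ≠ n ∧ a ^ m = a ^ n

/-- A Boolean ring: every element is idempotent. -/
def IsBooleanRing (R : Type u) [Ring R] : Prop :=
  ∀ a : R, IsIdempotentElem a

/-- `R / J(R)` is isomorphic to `S`, expressed via a surjective ring homomorphism
whose kernel is exactly the Jacobson radical of `R`. -/
def QuotJacobsonIsoTo (R : Type u) [Ring R] (S : Type v) [Ring S] : Prop :=
  ∃ f : R →+* S, Function.Surjective f ∧
    ∀ a : R, f a = 0 ↔ a ∈ Ideal.jacobson (⊥ : Ideal R)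


section AuxUWNC
variable {A : Type*} [Ring A]

private lemma uwnc_odd_pow_fixed {y : A} (hy : y * (y * y) = y) :
    ∀ m : ℕ, y ^ (2 * m + 1) = y := by
  intro m
  induction m with
  | zero => simp
  | succ k ih =>
      have h2 : 2 * (k + 1) + 1 = (2 * k + 1) + 2 := by ring
      rw [h2, pow_add, ih, sq]
      exact hy

/-- An idempotent that differs from a central idempotent by a nilpotent equals it. -/
private lemma uwnc_idem_eq_central {E f : A} (hE : IsIdempotentElem E)
    (hf : IsIdempotentElem f) (hc : ∀ x : A, E * x = x * E)
    (h : IsNilpotent (f - E)) : f = E := by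
  have hEf : E * f = f * E := hc f
  have e1 : E * E = E := hE
  have e2 : f * f = f := hf
  have e3 : f * E * f = f * E := by rw [mul_assoc, hEf, ← mul_assoc, e2]
  have e4 : f * E * E = f * E := by rw [mul_assoc, e1]
  have h3 : (f - E) * ((f - E) * (f - E)) = f - E := by
    simp only [mul_sub, sub_mul, e1, e2, hEf, e3, e4, ← mul_assoc]
    abel
  obtain ⟨n, hn⟩ := h
  have key : f - E = (f - E) ^ (2 * n + 1) := (uwnc_odd_pow_fixed h3 n).symm
  rw [show 2 * n + 1 = n + (n + 1) by ring, pow_add, hn, zero_mul] at key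
  exact sub_eq_zero.mp key

private lemma uwnc_very_sq {e : A} (h : IsVeryIdempotent e) :
    IsIdempotentElem (e ^ 2) := by
  rcases h with h | h
  · unfold IsIdempotentElem at *; rw [sq, h, h]
  · unfold IsIdempotentElem at *
    have h' : e * e = -e := by rw [← neg_mul_neg e e, h]
    rw [sq, h', neg_mul_neg, h']

private lemma uwnc_map_very {B : Type*} [Ring B] (f : A →+* B) {e : A}
    (h : IsVeryIdempotent e) : IsVeryIdempotent (f e) := by
  rcases h with h | h
  · exact Or.inl (by unfold IsIdempotentElem at *; rw [← map_mul, h])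
  · refine Or.inr ?_
    unfold IsIdempotentElem at *
    rw [← map_neg, ← map_mul, h]

/-- A uniquely weakly nil-clean ring is abelian. -/
private lemma uwnc_abelian (h : UniquelyWeaklyNilCleanRing A) : AbelianRing A := by
  intro e he x
  have key : ∀ u : A, (e + u) * (e + u) = e + u → u * u = 0 → u = 0 := by
    intro u hidem huu
    have hnilu : IsNilpotent (-u) := ⟨2, by rw [sq, neg_mul_neg, huu]⟩
    have h1 := (h e).2 0 e (-u) (e + u) ⟨1, pow_one 0⟩ (Or.inl he) hnilu
      (Or.inl hidem) (by rw [zero_add]) (by abel)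
    have l : e ^ 2 = e := by rw [sq, he]
    have r : (e + u) ^ 2 = e + u := by rw [sq, hidem]
    rw [l, r] at h1
    exact add_eq_left.mp h1.symm
  have h1 : e * x * (1 - e) = 0 := by
    set u := e * x * (1 - e) with hu
    have heu : e * u = u := by rw [hu, ← mul_assoc, ← mul_assoc, he]
    have hue : u * e = 0 := by
      rw [hu, mul_assoc, sub_mul, one_mul, he, sub_self, mul_zero]
    have huu : u * u = 0 := by
      have : u * u = u * e * (x * (1 - e)) := by rw [hu]; noncomm_ring
      rw [this, hue, zero_mul]
    refine key u ?_ huu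
    rw [mul_add, add_mul, add_mul, he, heu, hue, huu, add_zero, add_zero]
  have h2 : (1 - e) * x * e = 0 := by
    set v := (1 - e) * x * e with hv
    have hev : e * v = 0 := by
      have : e * v = (e * (1 - e)) * (x * e) := by rw [hv]; noncomm_ring
      rw [this, mul_sub, mul_one, he, sub_self, zero_mul]
    have hve : v * e = v := by rw [hv, mul_assoc, he]
    have hvv : v * v = 0 := by
      have : v * v = ((1 - e) * x) * (e * v) := by rw [hv]; noncomm_ring
      rw [this, hev, mul_zero]
    refine key v ?_ hvv
    rw [mul_add, add_mul, add_mul, he, hev, hve, hvv, add_zero, add_zero]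
  rw [mul_sub, mul_one, sub_eq_zero] at h1
  rw [sub_mul, one_mul, sub_mul, sub_eq_zero] at h2
  exact h1.trans h2.symm

end AuxUWNC

/-- The augmentation homomorphism `ω : RG → R`, sending `Σ r_g g` to `Σ r_g`. -/
noncomputable def augmentation (R : Type u) (G : Type v) [Ring R] [Group G] :
    MonoidAlgebra R G →+* R :=
  MonoidAlgebra.liftNCRingHom (RingHom.id R) 1 (fun _ _ => Commute.one_right _)

theorem stmt4 (R : Type u) (G : Type v) [Ring R] [Group G]
    (hnil : ∀ x : MonoidAlgebra R G, augmentation R G x = 0 → IsNilpotent x) :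
    UniquelyWeaklyNilCleanRing (MonoidAlgebra R G) ↔ UniquelyWeaklyNilCleanRing R := by
  classical
  have hωσ : ∀ r : R,
      augmentation R G ((MonoidAlgebra.singleOneRingHom r : MonoidAlgebra R G)) = r := by
    intro r
    simp [augmentation, MonoidAlgebra.singleOneRingHom, MonoidAlgebra.liftNCRingHom]
  have hniltr : ∀ y : MonoidAlgebra R G, IsNilpotent (augmentation R G y) → IsNilpotent y := by
    rintro y ⟨n, hn⟩
    obtain ⟨m, hm⟩ := hnil (y ^ n) (by rw [map_pow, hn])
    exact ⟨n * m, by rw [pow_mul, hm]⟩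
  constructor
  · intro H a
    constructor
    · obtain ⟨⟨w, e, hw, he, heq⟩, -⟩ := H (MonoidAlgebra.singleOneRingHom a)
      refine ⟨augmentation R G w, augmentation R G e, hw.map _,
        uwnc_map_very _ he, ?_⟩
      rw [← hωσ a, heq, map_add]
    · intro w₁ e₁ w₂ e₂ hw₁ he₁ hw₂ he₂ hd₁ hd₂
      have hG := (H (MonoidAlgebra.singleOneRingHom a)).2
        (MonoidAlgebra.singleOneRingHom w₁) (MonoidAlgebra.singleOneRingHom e₁)
        (MonoidAlgebra.singleOneRingHom w₂) (MonoidAlgebra.singleOneRingHom e₂)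
        (hw₁.map _) (uwnc_map_very _ he₁) (hw₂.map _) (uwnc_map_very _ he₂)
        (by rw [hd₁, map_add]) (by rw [hd₂, map_add])
      have := congrArg (augmentation R G) hG
      rwa [map_pow, map_pow, hωσ, hωσ] at this
  · intro H
    have habel : AbelianRing R := uwnc_abelian H
    have hsingle : ∀ r : R, (MonoidAlgebra.singleOneRingHom r : MonoidAlgebra R G)
        = MonoidAlgebra.single 1 r := by
      intro r; simp [MonoidAlgebra.singleOneRingHom]
    have hcent : ∀ r : R, (∀ s : R, r * s = s * r) →
        ∀ x : MonoidAlgebra R G, MonoidAlgebra.singleOneRingHom r * x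
          = x * MonoidAlgebra.singleOneRingHom r := by
      intro r hr x
      rw [hsingle]
      induction x using MonoidAlgebra.induction with
      | zero => simp
      | single_add a b f _ _ ih =>
          rw [mul_add, add_mul, ih]
          congr 1
          rw [MonoidAlgebra.single_mul_single, MonoidAlgebra.single_mul_single,
            one_mul, mul_one, hr]
    have hrigid : ∀ f : MonoidAlgebra R G, IsIdempotentElem f →
        f = MonoidAlgebra.singleOneRingHom (augmentation R G f) := by
      intro f hf
      have hωf : IsIdempotentElem (augmentation R G f) := by
        unfold IsIdempotentElem at *
        rw [← map_mul, hf]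
      refine uwnc_idem_eq_central ?_ hf ?_ ?_
      · unfold IsIdempotentElem at *
        rw [← map_mul, hωf]
      · exact hcent _ (fun s => habel _ hωf s)
      · exact hnil _ (by rw [map_sub, hωσ, sub_self])
    intro x
    constructor
    · obtain ⟨⟨w, e, hw, he, heq⟩, -⟩ := H (augmentation R G x)
      refine ⟨x - MonoidAlgebra.singleOneRingHom e, MonoidAlgebra.singleOneRingHom e,
        ?_, uwnc_map_very _ he, by abel⟩
      apply hniltr
      rw [map_sub, hωσ, heq, add_sub_cancel_right]
      exact hw
    · intro w₁ e₁ w₂ e₂ hw₁ he₁ hw₂ he₂ hd₁ hd₂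
      have hR := (H (augmentation R G x)).2
        (augmentation R G w₁) (augmentation R G e₁)
        (augmentation R G w₂) (augmentation R G e₂)
        (hw₁.map _) (uwnc_map_very _ he₁) (hw₂.map _) (uwnc_map_very _ he₂)
        (by rw [hd₁, map_add]) (by rw [hd₂, map_add])
      calc e₁ ^ 2 = MonoidAlgebra.singleOneRingHom (augmentation R G (e₁ ^ 2)) :=
            hrigid _ (uwnc_very_sq he₁)
        _ = MonoidAlgebra.singleOneRingHom ((augmentation R G e₁) ^ 2) := by rw [map_pow]
        _ = MonoidAlgebra.singleOneRingHom ((augmentation R G e₂) ^ 2) := by rw [hR]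
        _ = MonoidAlgebra.singleOneRingHom (augmentation R G (e₂ ^ 2)) := by
            rw [← map_pow (augmentation R G) e₂ 2]
        _ = e₂ ^ 2 := (hrigid _ (uwnc_very_sq he₂)).symm
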